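/- Let A and B be finite dimensional selfinjective k-algebras admitting algebra maps A → B → A composing to the identity with B projective as an A-module. Then dim(stmod A) ≤ dim(stmod B), where dim denotes the Rouquier dimension of a triangulated category. -/

import Mathlib

open CategoryTheory Function

section StableDimension

variable (R : Type) [Ring R]

/-- Two modules are stably isomorphic if they become isomorphic after adding projective
direct summands. -/
def stIso (X Y : ModuleCat.{0} R) : Prop :=
  ∃ P Q : ModuleCat.{0} R, Module.Projective R P ∧ Module.Projective R Q ∧
    Nonempty ((↥X × ↥P) ≃ₗ[R] (↥Y × ↥Q))

/-- `Y` is a cosyzygy (shift) of `X`: there is a short exact sequence `0 → X → P → Y → 0`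
with `P` projective.  For a selfinjective algebra this is the shift of the triangulated
structure on the stable module category. -/
def cosyzygyRel (X Y : ModuleCat.{0} R) : Prop :=
  ∃ P : ModuleCat.{0} R, Module.Projective R P ∧
    ∃ (f : X →ₗ[R] P) (g : P →ₗ[R] Y), Injective f ∧ Surjective g ∧ Exact f g

/-- Closure of a class of modules under (positive and negative) shifts in the stable
module category. -/
def shiftCl (C : Set (ModuleCat.{0} R)) : Set (ModuleCat.{0} R) :=
  {Y | ∃ X ∈ C, Relation.ReflTransGen
    (fun U V => cosyzygyRel R U V ∨ cosyzygyRel R V U) X Y}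

/-- `⟨C⟩`: closure under finite direct sums, direct summands and shifts, up to stable
isomorphism. -/
def spanCl (C : Set (ModuleCat.{0} R)) : Set (ModuleCat.{0} R) :=
  {X | ∃ (m : ℕ) (f : Fin m → ModuleCat.{0} R), (∀ i, f i ∈ shiftCl R C) ∧
    ∃ Z : ModuleCat.{0} R,
      stIso R (ModuleCat.of R (↥X × ↥Z)) (ModuleCat.of R (∀ i, ↥(f i)))}

/-- `C ∗ D` in the stable module category: objects `X` fitting (up to stable isomorphism)
in a triangle `C → X → D`, i.e. a short exact sequence `0 → C → E → D → 0` with `E`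
stably isomorphic to `X`. -/
def starCl (C D : Set (ModuleCat.{0} R)) : Set (ModuleCat.{0} R) :=
  {X | ∃ U ∈ C, ∃ W ∈ D, ∃ (E : ModuleCat.{0} R) (f : U →ₗ[R] E) (g : E →ₗ[R] W),
    Injective f ∧ Surjective g ∧ Exact f g ∧ stIso R E X}

/-- `⟨C⟩_n`: the `n`-step thickening of `C`, with `⟨C⟩₀` the zero objects (the projective
modules) and `⟨C⟩_{n} = ⟨⟨C⟩_{n−1} ∗ ⟨C⟩⟩`. -/
def levelCl (C : Set (ModuleCat.{0} R)) : ℕ → Set (ModuleCat.{0} R)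
  | 0 => {X | Module.Projective R X}
  | n + 1 => spanCl R (starCl R (levelCl C n) (spanCl R C))

/-- The Rouquier dimension of the stable module category of `R` is at most `d`: some
finitely generated module `M` generates every finitely generated module in `d+1` steps. -/
def stmodDimLE (d : ℕ) : Prop :=
  ∃ M : ModuleCat.{0} R, Module.Finite R M ∧
    ∀ X : ModuleCat.{0} R, Module.Finite R X → X ∈ levelCl R {M} (d + 1)

/-- The Rouquier dimension of the stable module category of `R`. -/
noncomputable def stmodDim : ℕ∞ :=
  sInf {e : ℕ∞ | ∃ d : ℕ, e = d ∧ stmodDimLE R d}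

end StableDimension

namespace StRetract
open CategoryTheory Function

variable {R S : Type} [Ring R] [Ring S] (φ : R →+* S)

/-- restriction of scalars, as an operation on objects -/
noncomputable abbrev rs (M : ModuleCat.{0} S) : ModuleCat.{0} R :=
  (ModuleCat.restrictScalars φ).obj M

/-- restriction of scalars for linear maps -/
def rsMap {M N : ModuleCat.{0} S} (g : ↥M →ₗ[S] ↥N) : ↥(rs φ M) →ₗ[R] ↥(rs φ N) :=
  ⟨⟨g, g.map_add⟩, fun r x => g.map_smul (φ r) x⟩

theorem rs_proj (hB : Module.Projective R ↥(rs φ (ModuleCat.of S S)))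
    {M : ModuleCat.{0} S} (hM : Module.Projective S ↥M) :
    Module.Projective R ↥(rs φ M) := by
  classical
  obtain ⟨s, hs⟩ := hM.out
  letI : Module R S := (rs φ (ModuleCat.of S S)).isModule
  haveI hPS : ∀ _ : ↥M, Module.Projective R S := fun _ => hB
  haveI hFree : Module.Projective R (↥M →₀ S) :=
    Module.Projective.of_equiv (finsuppLequivDFinsupp R).symm
  refine Module.Projective.of_split (R := R) (M := ↥M →₀ S)
    (⟨⟨s, s.map_add⟩, fun r x => s.map_smul (φ r) x⟩)
    (⟨⟨Finsupp.linearCombination S id, map_add _⟩, fun r x => map_smul _ (φ r) x⟩) ?_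
  exact LinearMap.ext hs

/-- a finiteness criterion -/
theorem finite_of_span {R : Type} [Ring R] (N : ModuleCat.{0} R) (T : Finset ↥N)
    (h : ∀ x : ↥N, x ∈ Submodule.span R (T : Set ↥N)) : Module.Finite R ↥N :=
  ⟨⟨T, Submodule.eq_top_iff'.2 h⟩⟩

/-- finiteness transfer along a compatible change of scalar rings -/
theorem finite_comp {R S : Type} [Ring R] [Ring S] (φ : R →+* S) {M : Type}
    [AddCommGroup M] [Module S M] [iRS : Module R S] [iRM : Module R M]
    (hRS : ∀ (r : R) (s : S), r • s = φ r * s)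
    (hRM : ∀ (r : R) (x : M), r • x = φ r • x)
    (hS : Module.Finite R S) (hM : Module.Finite S M) : Module.Finite R M := by
  classical
  obtain ⟨T, hT⟩ := hM.fg_top
  obtain ⟨U, hU⟩ := hS.fg_top
  set G : Finset M := (U ×ˢ T).image fun p => p.1 • p.2 with hG
  have claim : ∀ (s : S), ∀ m ∈ T, s • m ∈ Submodule.span R (G : Set M) := by
    intro s m hmT
    refine Submodule.span_induction (p := fun y _ => y • m ∈ Submodule.span R (G : Set M))
      ?_ ?_ ?_ ?_ (Submodule.eq_top_iff'.1 hU s)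
    · intro u hu
      exact Submodule.subset_span
        (Finset.mem_image.mpr ⟨(u, m), Finset.mem_product.mpr ⟨hu, hmT⟩, rfl⟩)
    · show (0 : S) • m ∈ Submodule.span R (G : Set M)
      rw [zero_smul]; exact Submodule.zero_mem _
    · intro x y _ _ hx hy
      show (x + y) • m ∈ Submodule.span R (G : Set M)
      rw [add_smul]; exact Submodule.add_mem _ hx hy
    · intro r x _ hx
      show (r • x) • m ∈ Submodule.span R (G : Set M)
      rw [hRS, mul_smul, ← hRM]
      exact Submodule.smul_mem _ r hx
  refine ⟨⟨G, Submodule.eq_top_iff'.2 fun x => ?_⟩⟩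
  obtain ⟨c, hc, hsum⟩ := Submodule.mem_span_set.1 (Submodule.eq_top_iff'.1 hT x)
  rw [← hsum]
  exact Submodule.finsuppSum_mem (S := Submodule.span R (G : Set M)) (f := c) (g := fun mi r => r • mi)
    (h := fun mi hmi => claim (c mi) mi (hc (Finsupp.mem_support_iff.2 hmi)))

/-- smul-wise finiteness transfer -/
theorem finite_of_smul_span {R₀ R M : Type} [Semiring R₀] [Ring R] [AddCommGroup M]
    [Module R₀ M] [iRM : Module R M]
    (h : ∀ (c : R₀) (y : M), ∃ a : R, c • y = a • y)
    (hfin : Module.Finite R₀ M) : Module.Finite R M := by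
  obtain ⟨T, hT⟩ := hfin.fg_top
  refine ⟨⟨T, Submodule.eq_top_iff'.2 fun x => ?_⟩⟩
  refine Submodule.span_induction
    (p := fun y _ => y ∈ Submodule.span R (T : Set M)) ?_ ?_ ?_ ?_
    (Submodule.eq_top_iff'.1 hT x)
  · exact fun y hy => Submodule.subset_span hy
  · exact Submodule.zero_mem _
  · exact fun u v _ _ hu hv => Submodule.add_mem _ hu hv
  · intro c y _ hy
    obtain ⟨a, ha⟩ := h c y
    show c • y ∈ Submodule.span R (T : Set M)
    rw [ha]; exact Submodule.smul_mem _ a hy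

/-- transitivity of module-finiteness along restriction of scalars -/
theorem rs_finite (hSfin : Module.Finite R ↥(rs φ (ModuleCat.of S S)))
    {M : ModuleCat.{0} S} (hM : Module.Finite S ↥M) : Module.Finite R ↥(rs φ M) :=
  finite_comp φ (M := ↥M)
    (iRS := (rs φ (ModuleCat.of S S)).isModule) (iRM := (rs φ M).isModule)
    (fun _ _ => rfl) (fun _ _ => rfl) hSfin hM

theorem rs_stIso (hB : Module.Projective R ↥(rs φ (ModuleCat.of S S)))
    {X Y : ModuleCat.{0} S} (h : stIso S X Y) : stIso R (rs φ X) (rs φ Y) := by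
  obtain ⟨P, Q, hP, hQ, ⟨e⟩⟩ := h
  exact ⟨rs φ P, rs φ Q, rs_proj φ hB hP, rs_proj φ hB hQ,
    ⟨⟨⟨⟨e, e.map_add⟩, fun r x => e.map_smul (φ r) x⟩, e.symm, e.left_inv, e.right_inv⟩⟩⟩

theorem rs_cosy (hB : Module.Projective R ↥(rs φ (ModuleCat.of S S)))
    {U V : ModuleCat.{0} S} (h : cosyzygyRel S U V) :
    cosyzygyRel R (rs φ U) (rs φ V) := by
  obtain ⟨P, hP, f, g, hf, hg, hfg⟩ := h
  exact ⟨rs φ P, rs_proj φ hB hP, rsMap φ f, rsMap φ g, hf, hg, hfg⟩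

theorem rs_shift (hB : Module.Projective R ↥(rs φ (ModuleCat.of S S)))
    {C : Set (ModuleCat.{0} S)} {X : ModuleCat.{0} S} (h : X ∈ shiftCl S C) :
    rs φ X ∈ shiftCl R ((rs φ) '' C) := by
  obtain ⟨X₀, hX₀, hrel⟩ := h
  refine ⟨rs φ X₀, ⟨X₀, hX₀, rfl⟩, ?_⟩
  exact Relation.ReflTransGen.lift (rs φ)
    (fun U V h => h.imp (rs_cosy φ hB) (rs_cosy φ hB)) _ _ hrel

theorem rs_span (hB : Module.Projective R ↥(rs φ (ModuleCat.of S S)))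
    {C : Set (ModuleCat.{0} S)} {X : ModuleCat.{0} S} (h : X ∈ spanCl S C) :
    rs φ X ∈ spanCl R ((rs φ) '' C) := by
  obtain ⟨m, f, hf, Z, P, Q, hP, hQ, ⟨e⟩⟩ := h
  refine ⟨m, fun j => rs φ (f j), fun j => rs_shift φ hB (hf j), rs φ Z,
    rs φ P, rs φ Q, rs_proj φ hB hP, rs_proj φ hB hQ,
    ⟨⟨⟨⟨e, e.map_add⟩, fun r x => e.map_smul (φ r) x⟩, e.symm, e.left_inv, e.right_inv⟩⟩⟩

theorem rs_star (hB : Module.Projective R ↥(rs φ (ModuleCat.of S S)))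
    {C D : Set (ModuleCat.{0} S)} {C₁ D₁ : Set (ModuleCat.{0} R)}
    (hC : ∀ Y ∈ C, rs φ Y ∈ C₁) (hD : ∀ Y ∈ D, rs φ Y ∈ D₁)
    {X : ModuleCat.{0} S} (h : X ∈ starCl S C D) : rs φ X ∈ starCl R C₁ D₁ := by
  obtain ⟨U, hU, W, hW, E, f, g, hf, hg, hfg, hst⟩ := h
  exact ⟨rs φ U, hC U hU, rs φ W, hD W hW, rs φ E, rsMap φ f, rsMap φ g, hf, hg, hfg,
    rs_stIso φ hB hst⟩

theorem shiftCl_mono {R : Type} [Ring R] {C D : Set (ModuleCat.{0} R)} (h : C ⊆ D) :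
    shiftCl R C ⊆ shiftCl R D := fun _ ⟨X₀, hX₀, hr⟩ => ⟨X₀, h hX₀, hr⟩

theorem spanCl_mono {R : Type} [Ring R] {C D : Set (ModuleCat.{0} R)} (h : C ⊆ D) :
    spanCl R C ⊆ spanCl R D := fun _ ⟨m, f, hf, rest⟩ =>
  ⟨m, f, fun j => shiftCl_mono h (hf j), rest⟩

theorem rs_level (hB : Module.Projective R ↥(rs φ (ModuleCat.of S S)))
    {C : Set (ModuleCat.{0} S)} :
    ∀ (n : ℕ) {X : ModuleCat.{0} S}, X ∈ levelCl S C n →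
      rs φ X ∈ levelCl R ((rs φ) '' C) n := by
  intro n
  induction n with
  | zero => exact fun h => rs_proj φ hB h
  | succ n ih =>
    intro X h
    have h1 := rs_span φ hB h
    refine spanCl_mono ?_ h1
    rintro Y ⟨W, hW, rfl⟩
    exact rs_star φ hB (fun Y hY => ih hY) (fun Y hY => rs_span φ hB hY) hW

theorem spanCl_congr {R : Type} [Ring R] {X Y : ModuleCat.{0} R} (e : ↥X ≃ₗ[R] ↥Y)
    {C : Set (ModuleCat.{0} R)} (h : Y ∈ spanCl R C) : X ∈ spanCl R C := by
  obtain ⟨m, f, hf, Z, P, Q, hP, hQ, ⟨u⟩⟩ := h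
  exact ⟨m, f, hf, Z, P, Q, hP, hQ,
    ⟨((e.prodCongr (LinearEquiv.refl R ↥Z)).prodCongr (LinearEquiv.refl R ↥P)).trans u⟩⟩

end StRetract
/-- If `A`, `B` are finite dimensional selfinjective algebras with algebra maps
`A → B → A` composing to the identity and `B` projective as an `A`-module, then
`dim(stmod A) ≤ dim(stmod B)`. -/
theorem stmodDim_le_of_retract (k : Type) [Field k]
    (A B : Type) [Ring A] [Ring B] [Algebra k A] [Algebra k B]
    [FiniteDimensional k A] [FiniteDimensional k B]
    (hA : Injective (ModuleCat.of A A)) (hB : Injective (ModuleCat.of B B))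
    (i : A →ₐ[k] B) (π : B →ₐ[k] A) (hπi : π.comp i = AlgHom.id k A)
    (hproj : Projective ((ModuleCat.restrictScalars i.toRingHom).obj (ModuleCat.of B B))) :
    stmodDim A ≤ stmodDim B := by
  have hπa : ∀ a : A, π (i a) = a := fun a => AlgHom.congr_fun hπi a
  have key : ∀ d : ℕ, stmodDimLE B d → stmodDimLE A d := by
    intro d hd
    obtain ⟨M, hMfin, hM⟩ := hd
    have hBproj : Module.Projective A ↥(StRetract.rs i.toRingHom (ModuleCat.of B B)) :=
      by haveI := hproj; infer_instance
    have hBfin : Module.Finite A ↥(StRetract.rs i.toRingHom (ModuleCat.of B B)) := by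
      refine StRetract.finite_of_smul_span (R₀ := k) (M := B)
        (iRM := (StRetract.rs i.toRingHom (ModuleCat.of B B)).isModule) ?_ inferInstance
      intro c y
      refine ⟨algebraMap k A c, ?_⟩
      show c • y = i (algebraMap k A c) * y
      rw [AlgHom.commutes, Algebra.smul_def]
    refine ⟨StRetract.rs i.toRingHom M, StRetract.rs_finite _ hBfin hMfin, ?_⟩
    intro X hX
    set X' := StRetract.rs π.toRingHom X with hX'def
    have hX'fin : Module.Finite B ↥X' := by
      refine StRetract.finite_of_smul_span (R₀ := A) (M := ↥X) (iRM := X'.isModule) ?_ hX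
      intro a y
      refine ⟨i a, ?_⟩
      show a • y = π (i a) • y
      rw [hπa]
    have h1 := hM X' hX'fin
    have h2 := StRetract.rs_level i.toRingHom hBproj (d + 1) h1
    rw [Set.image_singleton] at h2
    have e0 : ↥X ≃ₗ[A] ↥(StRetract.rs i.toRingHom X') :=
      ⟨⟨⟨id, fun _ _ => rfl⟩, by
        intro a x
        show a • x = π (i a) • x
        rw [hπa]⟩, id, fun _ => rfl, fun _ => rfl⟩
    exact StRetract.spanCl_congr e0 h2
  apply sInf_le_sInf
  rintro e ⟨d, rfl, hd⟩
  exact ⟨d, rfl, key d hd⟩
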